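/- Let ‖·‖ be a norm on ℝ^d. There is a constant C > 0 depending only on ‖·‖ such that the following holds. Let K ⊆ ℝ^d be a convex body that is λ-strongly convex with respect to ‖·‖, and let g_1, …, g_T ∈ ℝ^d be nonzero gain vectors with nonnegative coordinates (g_t ∈ ℝ^d₊) satisfying ‖g_t‖ ≤ M for all t. Let s_t := g_1 + ⋯ + g_t, let x_1 be a maximizer of ⟨s_1, x⟩ over x ∈ K, and for each t ∈ {2,…,T} let x_t be a maximizer of ⟨s_{t−1}, x⟩ over x ∈ K. Then for T ≥ 2 the regret satisfies max_{x∈K} Σ_{t=1}^T ⟨g_t, x⟩ − Σ_{t=1}^T ⟨g_t, x_t⟩ ≤ (C·M/λ)·log T. -/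

import Mathlib

open Pointwise RealInnerProductSpace


noncomputable def ftlF (x : ℝ) : ℝ := if x ≤ 1 then x else 1 + Real.log x

lemma ftlF_step {A B : ℝ} (hA : 0 ≤ A) (hAB : A ≤ B) (h1 : B - A ≤ 1) (hB : 0 < B) :
    (B - A) ^ 2 / B ≤ ftlF B - ftlF A := by
  have key : (B - A) ^ 2 / B ≤ (B - A) / B * min 1 B := by
    rcases le_total B 1 with h | h
    · have : min 1 B = B := min_eq_right h
      rw [this]
      rw [div_mul_eq_mul_div, div_le_div_iff₀ hB hB]
      nlinarith [mul_nonneg (mul_nonneg hB.le (sub_nonneg.mpr hAB)) hA]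
    · have : min 1 B = 1 := min_eq_left h
      rw [this, mul_one, pow_two, mul_div_assoc]
      have hBA : 0 ≤ B - A := by linarith
      calc (B - A) * ((B - A) / B) ≤ 1 * ((B - A) / B) := by
            apply mul_le_mul_of_nonneg_right h1 (div_nonneg hBA hB.le)
        _ = (B - A) / B := one_mul _
  -- now show (B - A)/B * min 1 B ≤ ftlF B - ftlF A
  have log_lb : ∀ x : ℝ, 1 ≤ x → x ≤ B → (B - x) / B ≤ Real.log B - Real.log x := by
    intro x hx hxB
    have hxpos : 0 < x := by linarith
    have := Real.log_le_sub_one_of_pos (show 0 < x / B by positivity)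
    have hlog : Real.log (x / B) = Real.log x - Real.log B := Real.log_div (ne_of_gt hxpos) (ne_of_gt hB)
    rw [hlog] at this
    have : Real.log x - Real.log B ≤ x / B - 1 := this
    have h2 : (B - x) / B = 1 - x / B := by field_simp
    linarith
  unfold ftlF
  rcases le_or_gt B 1 with hB1 | hB1
  · have hA1 : A ≤ 1 := le_trans hAB hB1
    rw [if_pos hB1, if_pos hA1]
    have : min 1 B = B := min_eq_right hB1
    rw [this] at key
    calc (B - A) ^ 2 / B ≤ (B - A) / B * B := key
      _ = B - A := by field_simp
  · rw [if_neg (not_le.mpr hB1)]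
    have hmin : min 1 B = 1 := min_eq_left hB1.le
    rw [hmin, mul_one] at key
    rcases le_or_gt A 1 with hA1 | hA1
    · rw [if_pos hA1]
      -- need (B-A)/B ≤ 1 + log B - A
      have h1A : (1 - A) / B ≤ 1 - A := by
        rw [div_le_iff₀ hB]; nlinarith
      have h2 : (B - 1) / B ≤ Real.log B - Real.log 1 := log_lb 1 le_rfl hB1.le
      rw [Real.log_one] at h2
      have : (B - A) / B = (1 - A) / B + (B - 1) / B := by field_simp; ring
      linarith
    · rw [if_neg (not_le.mpr hA1)]
      have := log_lb A hA1.le hAB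
      linarith

lemma ftl_sum_bound (b : ℕ → ℝ) (T : ℕ) (hT : 2 ≤ T)
    (hbpos : ∀ t ∈ Finset.Icc 1 T, 0 < b t) (hb1 : ∀ t ∈ Finset.Icc 1 T, b t ≤ 1) :
    ∑ t ∈ Finset.Icc 2 T, (b t) ^ 2 / (∑ i ∈ Finset.Icc 1 t, b i) ≤ 1 + Real.log T := by
  set B : ℕ → ℝ := fun t => ∑ i ∈ Finset.Icc 1 t, b i with hB
  have hBpos : ∀ m, 1 ≤ m → m ≤ T → 0 < B m := by
    intro m h1m hmT
    apply Finset.sum_pos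
    · intro i hi
      exact hbpos i (Finset.mem_Icc.mpr ⟨(Finset.mem_Icc.mp hi).1, le_trans (Finset.mem_Icc.mp hi).2 hmT⟩)
    · exact ⟨1, Finset.mem_Icc.mpr ⟨le_rfl, h1m⟩⟩
  have hBsucc : ∀ m, 1 ≤ m → B (m + 1) = B m + b (m + 1) := by
    intro m h1m
    exact Finset.sum_Icc_succ_top (by omega) b
  have main : ∀ m, 1 ≤ m → m ≤ T →
      ∑ t ∈ Finset.Icc 2 m, (b t) ^ 2 / B t ≤ ftlF (B m) - ftlF (B 1) := by
    intro m h1m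
    induction m, h1m using Nat.le_induction with
    | base => intro _; simp
    | succ m h1m ih =>
      intro hmT
      have hmT' : m ≤ T := by omega
      have hsum : ∑ t ∈ Finset.Icc 2 (m + 1), (b t) ^ 2 / B t
          = (∑ t ∈ Finset.Icc 2 m, (b t) ^ 2 / B t) + (b (m+1)) ^ 2 / B (m+1) :=
        Finset.sum_Icc_succ_top (by omega) _
      rw [hsum]
      have hmem : m + 1 ∈ Finset.Icc 1 T := Finset.mem_Icc.mpr ⟨by omega, hmT⟩
      have hstep : (b (m+1)) ^ 2 / B (m+1) ≤ ftlF (B (m+1)) - ftlF (B m) := by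
        have hd : b (m+1) = B (m+1) - B m := by rw [hBsucc m h1m]; ring
        rw [hd]
        exact ftlF_step (le_of_lt (hBpos m h1m hmT')) (by rw [hBsucc m h1m]; linarith [hbpos _ hmem])
          (by rw [hBsucc m h1m]; simpa using hb1 _ hmem) (hBpos (m+1) (by omega) hmT)
      linarith [ih hmT']
  have h1 := main T (by omega) le_rfl
  have hF1 : 0 ≤ ftlF (B 1) := by
    unfold ftlF
    have h0 : 0 < B 1 := hBpos 1 le_rfl (by omega)
    split
    · exact h0.le
    · have : 1 ≤ B 1 := by linarith [not_le.mp (by assumption)]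
      linarith [Real.log_nonneg this]
  have hBT : B T ≤ (T : ℝ) := by
    calc B T ≤ ∑ _i ∈ Finset.Icc 1 T, (1:ℝ) := Finset.sum_le_sum hb1
      _ = (T : ℝ) := by simp [Nat.card_Icc]
  have hFT : ftlF (B T) ≤ 1 + Real.log T := by
    unfold ftlF
    have hT1 : (1:ℝ) ≤ (T:ℝ) := by exact_mod_cast (by omega : 1 ≤ T)
    split
    · linarith [Real.log_nonneg hT1]
    · have h0 : 0 < B T := hBpos T (by omega) le_rfl
      have := Real.log_le_log h0 hBT
      linarith
  linarith

lemma seminorm_sum_le {ι E : Type*} [AddCommGroup E] [Module ℝ E] (n : Seminorm ℝ E)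
    (s : Finset ι) (f : ι → E) : n (∑ i ∈ s, f i) ≤ ∑ i ∈ s, n (f i) := by
  classical
  induction s using Finset.induction with
  | empty => simp
  | @insert a s h ih =>
    rw [Finset.sum_insert h, Finset.sum_insert h]
    exact le_trans (map_add_le_add n _ _) (by linarith)

lemma eucl_abs_apply_le {d : ℕ} (x : EuclideanSpace ℝ (Fin d)) (j : Fin d) : |x j| ≤ ‖x‖ := by
  rw [EuclideanSpace.norm_eq]
  have h : |x j| ^ 2 ≤ ∑ i, ‖x i‖ ^ 2 := by
    have := Finset.single_le_sum (f := fun i => ‖x i‖ ^ 2) (fun i _ => sq_nonneg _)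
      (Finset.mem_univ j)
    simpa [Real.norm_eq_abs] using this
  calc |x j| = Real.sqrt (|x j| ^ 2) := (Real.sqrt_sq (abs_nonneg _)).symm
    _ ≤ _ := Real.sqrt_le_sqrt h

lemma seminorm_upper {d : ℕ} (n : Seminorm ℝ (EuclideanSpace ℝ (Fin d))) :
    ∃ β > 0, ∀ x, n x ≤ β * ‖x‖ := by
  refine ⟨(∑ i, n (EuclideanSpace.single i (1:ℝ))) + 1, by positivity, fun x => ?_⟩
  have hx : x = ∑ i, x i • EuclideanSpace.single i (1:ℝ) := by
    ext j
    rw [WithLp.ofLp_sum, Finset.sum_apply]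
    simp [EuclideanSpace.single_apply]
  calc n x = n (∑ i, x i • EuclideanSpace.single i (1:ℝ)) := by rw [← hx]
    _ ≤ ∑ i, n (x i • EuclideanSpace.single i (1:ℝ)) := seminorm_sum_le n _ _
    _ ≤ ∑ i, n (EuclideanSpace.single i (1:ℝ)) * ‖x‖ := by
        apply Finset.sum_le_sum
        intro i _
        rw [map_smul_eq_mul, mul_comm (n _), Real.norm_eq_abs]
        exact mul_le_mul_of_nonneg_right (eucl_abs_apply_le x i) (apply_nonneg n _)
    _ = (∑ i, n (EuclideanSpace.single i (1:ℝ))) * ‖x‖ := by rw [← Finset.sum_mul]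
    _ ≤ ((∑ i, n (EuclideanSpace.single i (1:ℝ))) + 1) * ‖x‖ := by
        apply mul_le_mul_of_nonneg_right _ (norm_nonneg x); linarith

lemma seminorm_lower {d : ℕ} (n : Seminorm ℝ (EuclideanSpace ℝ (Fin d)))
    (hn : ∀ x, n x = 0 → x = 0) :
    ∃ α > 0, ∀ x, α * ‖x‖ ≤ n x := by
  obtain ⟨β, hβ, hβle⟩ := seminorm_upper n
  have hcont : Continuous fun x : EuclideanSpace ℝ (Fin d) => n x := by
    have : LipschitzWith ⟨β, hβ.le⟩ fun x : EuclideanSpace ℝ (Fin d) => n x := by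
      apply LipschitzWith.of_dist_le_mul
      intro x y
      rw [Real.dist_eq, dist_eq_norm]
      rw [abs_sub_le_iff]
      constructor
      · have h1 : n x ≤ n y + n (x - y) := by
          calc n x = n (y + (x - y)) := by rw [add_sub_cancel]
            _ ≤ n y + n (x - y) := map_add_le_add n _ _
        have := hβle (x - y)
        change _ ≤ β * _
        linarith
      · have h1 : n y ≤ n x + n (y - x) := by
          calc n y = n (x + (y - x)) := by rw [add_sub_cancel]
            _ ≤ n x + n (y - x) := map_add_le_add n _ _
        have h2 := hβle (y - x)
        rw [norm_sub_rev] at h2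
        change _ ≤ β * _
        linarith
    exact this.continuous
  by_cases hne : (Metric.sphere (0 : EuclideanSpace ℝ (Fin d)) 1).Nonempty
  · obtain ⟨w, hwmem, hwmin⟩ := (isCompact_sphere (0 : EuclideanSpace ℝ (Fin d)) 1).exists_isMinOn
      hne hcont.continuousOn
    have hw1 : ‖w‖ = 1 := mem_sphere_zero_iff_norm.mp hwmem
    have hα : 0 < n w := by
      rcases (apply_nonneg n w).lt_or_eq with h | h
      · exact h
      · exfalso
        have := hn w h.symm
        rw [this] at hw1; simp at hw1
    refine ⟨n w, hα, fun x => ?_⟩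
    by_cases hx : x = 0
    · simp [hx]
    · have hnx : 0 < ‖x‖ := norm_pos_iff.mpr hx
      set u := ‖x‖⁻¹ • x with hu
      have hu1 : u ∈ Metric.sphere (0 : EuclideanSpace ℝ (Fin d)) 1 := by
        rw [mem_sphere_zero_iff_norm, hu, norm_smul]
        simp [abs_of_pos (inv_pos.mpr hnx), inv_mul_cancel₀ hnx.ne']
      have := hwmin hu1
      have hnu : n u = ‖x‖⁻¹ * n x := by
        rw [hu, map_smul_eq_mul]
        simp [abs_of_pos (inv_pos.mpr hnx)]
      simp only [Set.mem_setOf_eq] at this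
      rw [hnu] at this
      calc n w * ‖x‖ ≤ (‖x‖⁻¹ * n x) * ‖x‖ := by
            apply mul_le_mul_of_nonneg_right this hnx.le
        _ = n x := by field_simp
  · refine ⟨1, one_pos, fun x => ?_⟩
    by_cases hx : x = 0
    · simp [hx]
    · exfalso
      apply hne
      have hnx : 0 < ‖x‖ := norm_pos_iff.mpr hx
      exact ⟨‖x‖⁻¹ • x, by
        rw [mem_sphere_zero_iff_norm, norm_smul]
        simp [abs_of_pos (inv_pos.mpr hnx), inv_mul_cancel₀ hnx.ne']⟩

lemma eucl_norm_le_sum_of_nonneg {d : ℕ} (x : EuclideanSpace ℝ (Fin d)) (hx : ∀ i, 0 ≤ x i) :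
    ‖x‖ ≤ ∑ i, x i := by
  rw [EuclideanSpace.norm_eq]
  have h : ∑ i, ‖x i‖ ^ 2 ≤ (∑ i, x i) ^ 2 := by
    have := Finset.sum_sq_le_sq_sum_of_nonneg (s := Finset.univ) (f := fun i => x i)
      (fun i _ => hx i)
    simpa [Real.norm_eq_abs, sq_abs] using this
  calc Real.sqrt (∑ i, ‖x i‖ ^ 2) ≤ Real.sqrt ((∑ i, x i) ^ 2) := Real.sqrt_le_sqrt h
    _ = ∑ i, x i := Real.sqrt_sq (Finset.sum_nonneg fun i _ => hx i)

lemma eucl_sum_le_sqrt_mul_norm {d : ℕ} (x : EuclideanSpace ℝ (Fin d)) (hx : ∀ i, 0 ≤ x i) :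
    ∑ i, x i ≤ (Real.sqrt d + 1) * ‖x‖ := by
  have h1 : (∑ i, x i) ^ 2 ≤ d * ∑ i, (x i) ^ 2 := by
    have := sq_sum_le_card_mul_sum_sq (s := Finset.univ) (f := fun i => x i)
    simpa using this
  have h2 : ∑ i, x i ≤ Real.sqrt d * ‖x‖ := by
    have hs : ∑ i, x i = Real.sqrt ((∑ i, x i) ^ 2) :=
      (Real.sqrt_sq (Finset.sum_nonneg fun i _ => hx i)).symm
    rw [hs]
    calc Real.sqrt ((∑ i, x i) ^ 2) ≤ Real.sqrt (d * ∑ i, (x i) ^ 2) := Real.sqrt_le_sqrt h1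
      _ = Real.sqrt d * Real.sqrt (∑ i, (x i) ^ 2) := Real.sqrt_mul (by positivity) _
      _ = Real.sqrt d * ‖x‖ := by
          rw [EuclideanSpace.norm_eq]
          simp [Real.norm_eq_abs, sq_abs]
  have := norm_nonneg x
  nlinarith [Real.sqrt_nonneg (d:ℝ)]

set_option maxHeartbeats 2000000 in
/-- There is a constant `C > 0`, depending only on the norm `n`, such that
Follow the Leader over any `λ`-strongly convex playing set (w.r.t. `n`), with nonzero
nonnegative gain vectors bounded by `M` in norm, has regret at most `(C·M/λ)·log T`
for `T ≥ 2`. -/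
theorem ftl_regret_nonnegative_gains
    {d : ℕ} (n : Seminorm ℝ (EuclideanSpace ℝ (Fin d)))
    (hn : ∀ x, n x = 0 → x = 0) :
    ∃ C > (0 : ℝ),
      ∀ (K : Set (EuclideanSpace ℝ (Fin d))),
        IsCompact K → Convex ℝ K → (interior K).Nonempty →
      ∀ lam : ℝ, 0 < lam →
      (∀ x ∈ K, ∀ y ∈ K,
        ({midpoint ℝ x y} : Set (EuclideanSpace ℝ (Fin d)))
          + (lam * (n (x - y)) ^ 2) • {z | n z ≤ 1} ⊆ K) →
      ∀ (M : ℝ) (T : ℕ), 2 ≤ T →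
      ∀ g : ℕ → EuclideanSpace ℝ (Fin d),
        (∀ t ∈ Finset.Icc 1 T, g t ≠ 0) →
        (∀ t ∈ Finset.Icc 1 T, ∀ i : Fin d, 0 ≤ g t i) →
        (∀ t ∈ Finset.Icc 1 T, n (g t) ≤ M) →
      ∀ s : ℕ → EuclideanSpace ℝ (Fin d),
        (∀ t, s t = ∑ i ∈ Finset.Icc 1 t, g i) →
      ∀ x : ℕ → EuclideanSpace ℝ (Fin d),
        x 1 ∈ K → (∀ z ∈ K, ⟪s 1, z⟫ ≤ ⟪s 1, x 1⟫) →
        (∀ t, 2 ≤ t → t ≤ T → x t ∈ K) →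
        (∀ t, 2 ≤ t → t ≤ T → ∀ z ∈ K, ⟪s (t - 1), z⟫ ≤ ⟪s (t - 1), x t⟫) →
      ∀ z ∈ K,
        ∑ t ∈ Finset.Icc 1 T, ⟪g t, z⟫ - ∑ t ∈ Finset.Icc 1 T, ⟪g t, x t⟫
          ≤ C * M / lam * Real.log T := by
  classical
  obtain ⟨β, hβ, hβle⟩ := seminorm_upper n
  obtain ⟨α, hα, hαle⟩ := seminorm_lower n hn
  set sd : ℝ := Real.sqrt d + 1 with hsd
  have hsd0 : 0 < sd := by positivity
  have hlog2 : 0 < Real.log 2 := Real.log_pos (by norm_num)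
  refine ⟨(β * sd / (2 * α ^ 3)) * (1 + 1 / Real.log 2), by positivity, ?_⟩
  intro K hKcomp hKconv hKint lam hlam hsc M T hT g hgne hgnn hgM s hs xx hx1K hx1max hxK hxmax z hzK
  have hane : α ≠ 0 := ne_of_gt hα
  have hbne : β ≠ 0 := ne_of_gt hβ
  have hlamne : lam ≠ 0 := ne_of_gt hlam
  have hlog2ne : Real.log 2 ≠ 0 := ne_of_gt hlog2
  have h1T : (1 : ℕ) ∈ Finset.Icc 1 T := Finset.mem_Icc.mpr ⟨le_rfl, by omega⟩
  have hg1pos : 0 < ‖g 1‖ := norm_pos_iff.mpr (hgne 1 h1T)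
  have hM : 0 < M :=
    lt_of_lt_of_le (by positivity : (0:ℝ) < α * ‖g 1‖) ((hαle (g 1)).trans (hgM 1 h1T))
  -- coordinates of s m are nonneg, and ∑ norms ≤ sd * ‖s m‖
  have hsnn : ∀ m, m ≤ T → ∀ j, 0 ≤ s m j := by
    intro m hm j
    rw [hs m]
    rw [WithLp.ofLp_sum, Finset.sum_apply]
    apply Finset.sum_nonneg
    intro i hi
    exact hgnn i (Finset.mem_Icc.mpr ⟨(Finset.mem_Icc.mp hi).1,
      le_trans (Finset.mem_Icc.mp hi).2 hm⟩) j
  have hsl : ∀ m, 1 ≤ m → m ≤ T → ∑ i ∈ Finset.Icc 1 m, ‖g i‖ ≤ sd * ‖s m‖ := by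
    intro m h1m hmT
    have step1 : ∀ i ∈ Finset.Icc 1 m, ‖g i‖ ≤ ∑ j, g i j := by
      intro i hi
      exact eucl_norm_le_sum_of_nonneg (g i) (hgnn i (Finset.mem_Icc.mpr
        ⟨(Finset.mem_Icc.mp hi).1, le_trans (Finset.mem_Icc.mp hi).2 hmT⟩))
    calc ∑ i ∈ Finset.Icc 1 m, ‖g i‖ ≤ ∑ i ∈ Finset.Icc 1 m, ∑ j, g i j :=
          Finset.sum_le_sum step1
      _ = ∑ j, s m j := by
          rw [Finset.sum_comm]
          apply Finset.sum_congr rfl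
          intro j _
          rw [hs m, WithLp.ofLp_sum, Finset.sum_apply]
      _ ≤ sd * ‖s m‖ := eucl_sum_le_sqrt_mul_norm (s m) (hsnn m hmT)
  have hApos : ∀ m, 1 ≤ m → m ≤ T → 0 < ∑ i ∈ Finset.Icc 1 m, ‖g i‖ := by
    intro m h1m hmT
    apply Finset.sum_pos
    · intro i hi
      exact norm_pos_iff.mpr (hgne i (Finset.mem_Icc.mpr ⟨(Finset.mem_Icc.mp hi).1,
        le_trans (Finset.mem_Icc.mp hi).2 hmT⟩))
    · exact ⟨1, Finset.mem_Icc.mpr ⟨le_rfl, h1m⟩⟩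
  have hspos : ∀ m, 1 ≤ m → m ≤ T → 0 < ‖s m‖ := by
    intro m h1m hmT
    nlinarith [hsl m h1m hmT, hApos m h1m hmT]
  have hsne : ∀ m, 1 ≤ m → m ≤ T → s m ≠ 0 := by
    intro m h1m hmT
    exact norm_pos_iff.mp (hspos m h1m hmT)
  -- leaders
  have hex : ∀ t : ℕ, ∃ w, w ∈ K ∧ ∀ p ∈ K, ⟪s t, p⟫ ≤ ⟪s t, w⟫ := by
    intro t
    have hcont : Continuous fun p : EuclideanSpace ℝ (Fin d) => ⟪s t, p⟫ :=
      continuous_const.inner continuous_id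
    obtain ⟨w, hwK, hw⟩ := hKcomp.exists_isMaxOn ⟨z, hzK⟩ hcont.continuousOn
    exact ⟨w, hwK, fun p hp => hw hp⟩
  choose Y hYK hYmax using hex
  set y : ℕ → EuclideanSpace ℝ (Fin d) := fun t => if t = 1 then xx 1 else Y t with hy
  have hyK : ∀ t, y t ∈ K := by
    intro t
    by_cases h : t = 1 <;> simp [hy, h, hYK, hx1K]
  have hymax : ∀ t, ∀ p ∈ K, ⟪s t, p⟫ ≤ ⟪s t, y t⟫ := by
    intro t p hp
    by_cases h : t = 1
    · subst h; simpa [hy] using hx1max p hp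
    · simpa [hy, h] using hYmax t p hp
  have hssucc : ∀ m : ℕ, s (m + 1) = s m + g (m + 1) := by
    intro m
    rw [hs, hs]
    exact Finset.sum_Icc_succ_top (by omega) g
  -- be the leader
  have hbtl : ∀ m, 1 ≤ m → ⟪s m, y m⟫ ≤ ∑ t ∈ Finset.Icc 1 m, ⟪g t, y t⟫ := by
    intro m h1m
    induction m, h1m using Nat.le_induction with
    | base =>
      have : s 1 = g 1 := by rw [hs]; simp
      simp [this]
    | succ m h1m ih =>
      have hsum : ∑ t ∈ Finset.Icc 1 (m+1), ⟪g t, y t⟫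
          = (∑ t ∈ Finset.Icc 1 m, ⟪g t, y t⟫) + ⟪g (m+1), y (m+1)⟫ :=
        Finset.sum_Icc_succ_top (by omega) _
      rw [hsum]
      have hexp : ⟪s (m+1), y (m+1)⟫ = ⟪s m, y (m+1)⟫ + ⟪g (m+1), y (m+1)⟫ := by
        rw [hssucc m, inner_add_left]
      rw [hexp]
      have := hymax m (y (m+1)) (hyK (m+1))
      linarith
  -- regret reduces to sum over Icc 2 T of ⟪g t, y t - x t⟫
  have hregret : ∑ t ∈ Finset.Icc 1 T, ⟪g t, z⟫ - ∑ t ∈ Finset.Icc 1 T, ⟪g t, xx t⟫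
      ≤ ∑ t ∈ Finset.Icc 2 T, ⟪g t, y t - xx t⟫ := by
    have h1 : ∑ t ∈ Finset.Icc 1 T, ⟪g t, z⟫ = ⟪s T, z⟫ := by
      rw [hs T, sum_inner]
    have h2 : ⟪s T, z⟫ ≤ ⟪s T, y T⟫ := hymax T z hzK
    have h3 := hbtl T (by omega)
    have h4 : ∑ t ∈ Finset.Icc 1 T, ⟪g t, y t⟫ - ∑ t ∈ Finset.Icc 1 T, ⟪g t, xx t⟫
        = ∑ t ∈ Finset.Icc 1 T, ⟪g t, y t - xx t⟫ := by
      rw [← Finset.sum_sub_distrib]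
      apply Finset.sum_congr rfl
      intro t _
      rw [inner_sub_right]
    have hsplit : Finset.Icc 1 T = insert 1 (Finset.Icc 2 T) := by
      ext a; simp only [Finset.mem_Icc, Finset.mem_insert]; omega
    have h5 : ∑ t ∈ Finset.Icc 1 T, ⟪g t, y t - xx t⟫
        = ⟪g 1, y 1 - xx 1⟫ + ∑ t ∈ Finset.Icc 2 T, ⟪g t, y t - xx t⟫ := by
      rw [hsplit, Finset.sum_insert (by simp)]
    have h6 : ⟪g 1, y 1 - xx 1⟫ = 0 := by
      have : y 1 = xx 1 := by simp [hy]
      simp [this]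
    linarith
  -- per-step stability bound
  have half : ∀ (u : EuclideanSpace ℝ (Fin d)) (xu xv : EuclideanSpace ℝ (Fin d)),
      u ≠ 0 → xu ∈ K → (∀ p ∈ K, ⟪u, p⟫ ≤ ⟪u, xu⟫) → xv ∈ K →
      2 * lam * (n (xu - xv)) ^ 2 * ‖u‖ ≤ β * ⟪u, xu - xv⟫ := by
    intro u xu xv hu hxuK hxumax hxvK
    have hupos : 0 < ‖u‖ := norm_pos_iff.mpr hu
    have hnu : 0 < n u := lt_of_lt_of_le (by positivity) (hαle u)
    set c : ℝ := lam * (n (xu - xv)) ^ 2 with hc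
    have hc0 : 0 ≤ c := by positivity
    set w : EuclideanSpace ℝ (Fin d) := (n u)⁻¹ • u with hw
    have hnw : n w ≤ 1 := by
      rw [hw, map_smul_eq_mul]
      rw [Real.norm_eq_abs, abs_of_pos (inv_pos.mpr hnu), inv_mul_cancel₀ hnu.ne']
    have hmemK : midpoint ℝ xu xv + c • w ∈ K := by
      apply hsc xu hxuK xv hxvK
      exact Set.add_mem_add (Set.mem_singleton _) (Set.smul_mem_smul_set hnw)
    have hineq := hxumax _ hmemK
    rw [inner_add_right, real_inner_smul_right] at hineq
    have hiw : ⟪u, w⟫ = (n u)⁻¹ * ‖u‖ ^ 2 := by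
      rw [hw, real_inner_smul_right, real_inner_self_eq_norm_sq]
    have hmid : xu - midpoint ℝ xu xv = (2:ℝ)⁻¹ • (xu - xv) := by
      rw [midpoint_eq_smul_add, invOf_eq_inv]
      module
    have hkey : c * ((n u)⁻¹ * ‖u‖ ^ 2) ≤ ⟪u, xu - xv⟫ / 2 := by
      have h1 : ⟪u, xu⟫ - ⟪u, midpoint ℝ xu xv⟫ = ⟪u, xu - xv⟫ / 2 := by
        rw [← inner_sub_right, hmid, real_inner_smul_right]
        ring
      rw [hiw] at hineq
      linarith
    have hmono2 : ‖u‖ ≤ β * ((n u)⁻¹ * ‖u‖ ^ 2) := by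
      rw [inv_mul_eq_div, mul_div_assoc', le_div_iff₀ hnu]
      nlinarith [hβle u]
    calc 2 * lam * (n (xu - xv)) ^ 2 * ‖u‖ = 2 * (c * ‖u‖) := by rw [hc]; ring
      _ ≤ 2 * (c * (β * ((n u)⁻¹ * ‖u‖ ^ 2))) := by
          apply mul_le_mul_of_nonneg_left (mul_le_mul_of_nonneg_left hmono2 hc0) (by norm_num)
      _ = 2 * β * (c * ((n u)⁻¹ * ‖u‖ ^ 2)) := by ring
      _ ≤ 2 * β * (⟪u, xu - xv⟫ / 2) := by
          apply mul_le_mul_of_nonneg_left hkey (by positivity)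
      _ = β * ⟪u, xu - xv⟫ := by ring
  have hstep : ∀ t ∈ Finset.Icc 2 T, ⟪g t, y t - xx t⟫
      ≤ (β * sd / (2 * α ^ 2 * lam)) * (‖g t‖ ^ 2 / ∑ i ∈ Finset.Icc 1 t, ‖g i‖) := by
    intro t ht
    obtain ⟨ht2, htT⟩ := Finset.mem_Icc.mp ht
    obtain ⟨t', rfl⟩ : ∃ t', t = t' + 1 := ⟨t - 1, by omega⟩
    have ht'1 : 1 ≤ t' := by omega
    have hxmax' : ∀ p ∈ K, ⟪s t', p⟫ ≤ ⟪s t', xx (t' + 1)⟫ := by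
      have := hxmax (t' + 1) ht2 htT
      simpa using this
    have hApos' : 0 < ∑ i ∈ Finset.Icc 1 (t' + 1), ‖g i‖ := hApos (t' + 1) (by omega) htT
    have hSpos : 0 < ‖s (t' + 1)‖ := hspos (t' + 1) (by omega) htT
    have hVpos : 0 < ‖s t'‖ := hspos t' ht'1 (by omega)
    have hGpos : 0 < ‖g (t' + 1)‖ :=
      norm_pos_iff.mpr (hgne (t' + 1) (Finset.mem_Icc.mpr ⟨by omega, htT⟩))
    have hAS : ∑ i ∈ Finset.Icc 1 (t' + 1), ‖g i‖ ≤ sd * ‖s (t' + 1)‖ :=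
      hsl (t' + 1) (by omega) htT
    have h1 := half (s (t' + 1)) (y (t' + 1)) (xx (t' + 1)) (hsne (t' + 1) (by omega) htT)
      (hyK (t' + 1)) (hymax (t' + 1)) (hxK (t' + 1) ht2 htT)
    have h2 := half (s t') (xx (t' + 1)) (y (t' + 1)) (hsne t' ht'1 (by omega))
      (hxK (t' + 1) ht2 htT) hxmax' (hyK (t' + 1))
    have hflip : n (xx (t' + 1) - y (t' + 1)) = n (y (t' + 1) - xx (t' + 1)) := by
      rw [← neg_sub, map_neg_eq_map]
    have hinner2 : ⟪s t', xx (t' + 1) - y (t' + 1)⟫ = - ⟪s t', y (t' + 1) - xx (t' + 1)⟫ := by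
      rw [← inner_neg_right]
      congr 1
      abel
    rw [hflip, hinner2] at h2
    have hsub : ⟪s (t' + 1), y (t' + 1) - xx (t' + 1)⟫ - ⟪s t', y (t' + 1) - xx (t' + 1)⟫
        = ⟪g (t' + 1), y (t' + 1) - xx (t' + 1)⟫ := by
      rw [← inner_sub_left]
      congr 1
      rw [hssucc t']
      abel
    have hcomb : 2 * lam * (n (y (t' + 1) - xx (t' + 1))) ^ 2 * (‖s (t' + 1)‖ + ‖s t'‖)
        ≤ β * ⟪g (t' + 1), y (t' + 1) - xx (t' + 1)⟫ := by
      have hsub' := congrArg (fun q => β * q) hsub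
      simp only [mul_sub] at hsub'
      linarith [h1, h2, hsub']
    have hCS2 : α * ⟪g (t' + 1), y (t' + 1) - xx (t' + 1)⟫
        ≤ ‖g (t' + 1)‖ * n (y (t' + 1) - xx (t' + 1)) := by
      have hcs := real_inner_le_norm (g (t' + 1)) (y (t' + 1) - xx (t' + 1))
      have h3 := hαle (y (t' + 1) - xx (t' + 1))
      linarith [mul_le_mul_of_nonneg_left hcs hα.le,
        mul_le_mul_of_nonneg_left h3 hGpos.le]
    have hLHSnn : (0:ℝ) ≤ 2 * lam * (n (y (t' + 1) - xx (t' + 1))) ^ 2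
        * (‖s (t' + 1)‖ + ‖s t'‖) := by positivity
    have hr0 : 0 ≤ ⟪g (t' + 1), y (t' + 1) - xx (t' + 1)⟫ := by
      have h4 : β * 0 ≤ β * ⟪g (t' + 1), y (t' + 1) - xx (t' + 1)⟫ := by
        rw [mul_zero]
        exact le_trans hLHSnn hcomb
      exact le_of_mul_le_mul_left h4 hβ
    rcases eq_or_lt_of_le (apply_nonneg n (y (t' + 1) - xx (t' + 1))) with hΔ0 | hΔpos
    · have hΔz : y (t' + 1) - xx (t' + 1) = 0 := hn _ hΔ0.symm
      have hre : ⟪g (t' + 1), y (t' + 1) - xx (t' + 1)⟫ = 0 := by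
        rw [hΔz, inner_zero_right]
      rw [hre]
      apply mul_nonneg (by positivity) (div_nonneg (sq_nonneg _) hApos'.le)
    · have hdrop : (0:ℝ) ≤ 2 * lam * α * (n (y (t' + 1) - xx (t' + 1))) ^ 2 * ‖s t'‖ := by
        positivity
      have h' : (2 * lam * α * ‖s (t' + 1)‖ * n (y (t' + 1) - xx (t' + 1)))
            * n (y (t' + 1) - xx (t' + 1))
          ≤ (β * ‖g (t' + 1)‖) * n (y (t' + 1) - xx (t' + 1)) := by
        linarith [mul_le_mul_of_nonneg_left hcomb hα.le,
          mul_le_mul_of_nonneg_left hCS2 hβ.le, hdrop]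
      have hd : 2 * lam * α * ‖s (t' + 1)‖ * n (y (t' + 1) - xx (t' + 1))
          ≤ β * ‖g (t' + 1)‖ := le_of_mul_le_mul_right h' hΔpos
      have hgoal : ⟪g (t' + 1), y (t' + 1) - xx (t' + 1)⟫
            * (2 * α ^ 2 * lam * ∑ i ∈ Finset.Icc 1 (t' + 1), ‖g i‖)
          ≤ β * sd * ‖g (t' + 1)‖ ^ 2 := by
        calc ⟪g (t' + 1), y (t' + 1) - xx (t' + 1)⟫
              * (2 * α ^ 2 * lam * ∑ i ∈ Finset.Icc 1 (t' + 1), ‖g i‖)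
            ≤ ⟪g (t' + 1), y (t' + 1) - xx (t' + 1)⟫
              * (2 * α ^ 2 * lam * (sd * ‖s (t' + 1)‖)) := by
              apply mul_le_mul_of_nonneg_left _ hr0
              exact mul_le_mul_of_nonneg_left hAS (by positivity)
          _ = (α * ⟪g (t' + 1), y (t' + 1) - xx (t' + 1)⟫)
              * (2 * α * lam * ‖s (t' + 1)‖) * sd := by ring
          _ ≤ (‖g (t' + 1)‖ * n (y (t' + 1) - xx (t' + 1)))
              * (2 * α * lam * ‖s (t' + 1)‖) * sd := by
              apply mul_le_mul_of_nonneg_right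
                (mul_le_mul_of_nonneg_right hCS2 (by positivity)) hsd0.le
          _ = ((2 * lam * α * ‖s (t' + 1)‖ * n (y (t' + 1) - xx (t' + 1)))
              * ‖g (t' + 1)‖) * sd := by ring
          _ ≤ ((β * ‖g (t' + 1)‖) * ‖g (t' + 1)‖) * sd := by
              apply mul_le_mul_of_nonneg_right
                (mul_le_mul_of_nonneg_right hd hGpos.le) hsd0.le
          _ = β * sd * ‖g (t' + 1)‖ ^ 2 := by ring
      have hfrac : (β * sd / (2 * α ^ 2 * lam))
            * (‖g (t' + 1)‖ ^ 2 / ∑ i ∈ Finset.Icc 1 (t' + 1), ‖g i‖)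
          = (β * sd * ‖g (t' + 1)‖ ^ 2)
            / (2 * α ^ 2 * lam * ∑ i ∈ Finset.Icc 1 (t' + 1), ‖g i‖) :=
        div_mul_div_comm _ _ _ _
      rw [hfrac, le_div_iff₀ (mul_pos (by positivity : (0:ℝ) < 2 * α ^ 2 * lam) hApos')]
      exact hgoal
  -- sum lemma application
  have hsum2 : ∑ t ∈ Finset.Icc 2 T, ‖g t‖ ^ 2 / (∑ i ∈ Finset.Icc 1 t, ‖g i‖)
      ≤ (M / α) * (1 + Real.log T) := by
    set b : ℕ → ℝ := fun t => (α / M) * ‖g t‖ with hb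
    have hbpos : ∀ t ∈ Finset.Icc 1 T, 0 < b t := by
      intro t htm
      have : 0 < ‖g t‖ := norm_pos_iff.mpr (hgne t htm)
      positivity
    have hb1 : ∀ t ∈ Finset.Icc 1 T, b t ≤ 1 := by
      intro t htm
      show (α / M) * ‖g t‖ ≤ 1
      rw [div_mul_eq_mul_div, div_le_one hM]
      calc α * ‖g t‖ ≤ n (g t) := hαle (g t)
        _ ≤ M := hgM t htm
    have hsb := ftl_sum_bound b T hT hbpos hb1
    have heq : ∀ t ∈ Finset.Icc 2 T,
        ‖g t‖ ^ 2 / (∑ i ∈ Finset.Icc 1 t, ‖g i‖)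
          = (M / α) * ((b t) ^ 2 / (∑ i ∈ Finset.Icc 1 t, b i)) := by
      intro t htm
      obtain ⟨ht2, htT⟩ := Finset.mem_Icc.mp htm
      have hAt : 0 < ∑ i ∈ Finset.Icc 1 t, ‖g i‖ := hApos t (by omega) htT
      have hBt : ∑ i ∈ Finset.Icc 1 t, b i = (α / M) * ∑ i ∈ Finset.Icc 1 t, ‖g i‖ := by
        rw [hb, Finset.mul_sum]
      have hMne : M ≠ 0 := ne_of_gt hM
      rw [hBt, hb]
      field_simp
    calc ∑ t ∈ Finset.Icc 2 T, ‖g t‖ ^ 2 / (∑ i ∈ Finset.Icc 1 t, ‖g i‖)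
        = ∑ t ∈ Finset.Icc 2 T, (M / α) * ((b t) ^ 2 / (∑ i ∈ Finset.Icc 1 t, b i)) :=
          Finset.sum_congr rfl heq
      _ = (M / α) * ∑ t ∈ Finset.Icc 2 T, (b t) ^ 2 / (∑ i ∈ Finset.Icc 1 t, b i) := by
          rw [Finset.mul_sum]
      _ ≤ (M / α) * (1 + Real.log T) := by
          apply mul_le_mul_of_nonneg_left hsb (by positivity)
  -- assemble
  have hfin : ∑ t ∈ Finset.Icc 2 T, ⟪g t, y t - xx t⟫
      ≤ (β * sd / (2 * α ^ 2 * lam)) * ((M / α) * (1 + Real.log T)) := by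
    calc ∑ t ∈ Finset.Icc 2 T, ⟪g t, y t - xx t⟫
        ≤ ∑ t ∈ Finset.Icc 2 T, (β * sd / (2 * α ^ 2 * lam))
            * (‖g t‖ ^ 2 / ∑ i ∈ Finset.Icc 1 t, ‖g i‖) := Finset.sum_le_sum hstep
      _ = (β * sd / (2 * α ^ 2 * lam)) * ∑ t ∈ Finset.Icc 2 T,
            (‖g t‖ ^ 2 / ∑ i ∈ Finset.Icc 1 t, ‖g i‖) := by rw [Finset.mul_sum]
      _ ≤ _ := by
          apply mul_le_mul_of_nonneg_left hsum2 (by positivity)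
  have hlogT : Real.log 2 ≤ Real.log T := by
    apply Real.log_le_log (by norm_num)
    exact_mod_cast hT
  have hlogTpos : 0 < Real.log T := lt_of_lt_of_le hlog2 hlogT
  have hlast : (β * sd / (2 * α ^ 2 * lam)) * ((M / α) * (1 + Real.log T))
      ≤ (β * sd / (2 * α ^ 3)) * (1 + 1 / Real.log 2) * M / lam * Real.log T := by
    have hexp : (β * sd / (2 * α ^ 2 * lam)) * ((M / α) * (1 + Real.log T))
        = (β * sd * M / (2 * α ^ 3 * lam)) * (1 + Real.log T) := by
      field_simp
    have h1log : 1 + Real.log T ≤ (1 + 1 / Real.log 2) * Real.log T := by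
      have : 1 ≤ Real.log T / Real.log 2 := (one_le_div hlog2).mpr hlogT
      have h2 : (1 + 1 / Real.log 2) * Real.log T = Real.log T + Real.log T / Real.log 2 := by
        field_simp
      linarith
    rw [hexp]
    have hpos2 : (0:ℝ) ≤ β * sd * M / (2 * α ^ 3 * lam) := by positivity
    calc (β * sd * M / (2 * α ^ 3 * lam)) * (1 + Real.log T)
        ≤ (β * sd * M / (2 * α ^ 3 * lam)) * ((1 + 1 / Real.log 2) * Real.log T) :=
          mul_le_mul_of_nonneg_left h1log hpos2
      _ = (β * sd / (2 * α ^ 3)) * (1 + 1 / Real.log 2) * M / lam * Real.log T := by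
          field_simp
  linarith
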